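/- Let F be the free group on two generators x₁, x₂, and let R₁, R₂, R₃ be the normal closures in F of {x₁}, {x₂}, {x₁x₂⁻¹} respectively. Then: (a) F/R_i is isomorphic to ℤ for each i ∈ {1,2,3}; (b) R_i ⊔ R_j = F for all i ≠ j (i.e. F/R_iR_j is trivial); and (c) [F,F] = ⁅R₁,R₂⁆ = R_i ∩ R_j for all i ≠ j. -/

import Mathlib

/-- The elements `x₁`, `x₂`, `x₁x₂⁻¹` of the free group on two generators. -/
def ctrGen : Fin 3 → FreeGroup (Fin 2) :=
  ![FreeGroup.of 0, FreeGroup.of 1, FreeGroup.of 0 * (FreeGroup.of 1)⁻¹]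

/-- The normal closures `R₁`, `R₂`, `R₃` of `{x₁}`, `{x₂}`, `{x₁x₂⁻¹}`. -/
def ctrR (i : Fin 3) : Subgroup (FreeGroup (Fin 2)) :=
  Subgroup.normalClosure {ctrGen i}

instance (i : Fin 3) : (ctrR i).Normal := Subgroup.normalClosure_normal

open FreeGroup Subgroup

abbrev F2 := FreeGroup (Fin 2)

def ctrφ : Fin 3 → (F2 →* Multiplicative ℤ) :=
  ![FreeGroup.lift ![1, Multiplicative.ofAdd 1],
    FreeGroup.lift ![Multiplicative.ofAdd 1, 1],
    FreeGroup.lift ![Multiplicative.ofAdd 1, Multiplicative.ofAdd 1]]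

/-- a subgroup containing both generators is everything -/
lemma ctr_eq_top {S : Subgroup F2} (h0 : FreeGroup.of 0 ∈ S) (h1 : FreeGroup.of 1 ∈ S) :
    S = ⊤ := by
  rw [eq_top_iff, ← FreeGroup.closure_range_of (Fin 2)]
  apply Subgroup.closure_le S |>.2
  rintro - ⟨a, rfl⟩
  fin_cases a <;> assumption

lemma ctr_R_le_ker (i : Fin 3) : ctrR i ≤ (ctrφ i).ker := by
  apply Subgroup.normalClosure_le_normal
  rw [Set.singleton_subset_iff]
  fin_cases i <;> simp [ctrGen, ctrφ, MonoidHom.mem_ker]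

/-- generic kernel ≤ normal-closure lemma via the cyclic quotient -/
lemma ker_le_aux (N : Subgroup F2) [N.Normal] (φ : F2 →* Multiplicative ℤ)
    (hN : N ≤ φ.ker) (t : F2) (ht : φ t = Multiplicative.ofAdd 1)
    (h0 : QuotientGroup.mk' N (FreeGroup.of 0) ∈ Subgroup.zpowers (QuotientGroup.mk' N t))
    (h1 : QuotientGroup.mk' N (FreeGroup.of 1) ∈ Subgroup.zpowers (QuotientGroup.mk' N t)) :
    φ.ker ≤ N := by
  set mk := QuotientGroup.mk' N
  have hall : ∀ w : F2, mk w ∈ Subgroup.zpowers (mk t) := by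
    intro w
    have hw : w ∈ Subgroup.closure (Set.range (FreeGroup.of : Fin 2 → F2)) := by
      rw [FreeGroup.closure_range_of]; trivial
    induction hw using Subgroup.closure_induction with
    | mem x hx =>
      obtain ⟨a, rfl⟩ := hx
      fin_cases a <;> assumption
    | one => simpa using Subgroup.one_mem _
    | mul x y _ _ hx hy => simpa [map_mul] using Subgroup.mul_mem _ hx hy
    | inv x _ hx => simpa [map_inv] using Subgroup.inv_mem _ hx
  intro w hw
  obtain ⟨n, hn⟩ := hall w
  have hlift : QuotientGroup.lift N φ hN (mk w) = φ w := rfl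
  have h1' : QuotientGroup.lift N φ hN (mk w) = Multiplicative.ofAdd n := by
    rw [← hn, map_zpow]
    have : QuotientGroup.lift N φ hN (mk t) = Multiplicative.ofAdd 1 := by rw [← ht]; rfl
    rw [this]
    rw [← ofAdd_zsmul]; norm_num
  rw [hlift, MonoidHom.mem_ker.1 hw] at h1'
  have hn0 : n = 0 := by
    have := h1'.symm
    exact ofAdd_eq_one.1 this
  rw [hn0] at hn
  have : mk w = 1 := by rw [← hn]; simp
  exact (QuotientGroup.eq_one_iff w).1 this

lemma ctr_gen_mem (i : Fin 3) : ctrGen i ∈ ctrR i :=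
  Subgroup.subset_normalClosure rfl

lemma ctr_ker_eq (i : Fin 3) : ctrR i = (ctrφ i).ker := by
  refine le_antisymm (ctr_R_le_ker i) ?_
  fin_cases i
  · show (ctrφ 0).ker ≤ ctrR 0
    refine ker_le_aux _ _ (ctr_R_le_ker 0) (FreeGroup.of 1) (by simp [ctrφ]) ?_ (Subgroup.mem_zpowers _)
    have : QuotientGroup.mk' (ctrR 0) (FreeGroup.of 0) = 1 := by
      rw [QuotientGroup.mk'_apply, QuotientGroup.eq_one_iff]
      simpa [ctrGen] using ctr_gen_mem 0
    rw [this]; exact Subgroup.one_mem _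
  · show (ctrφ 1).ker ≤ ctrR 1
    refine ker_le_aux _ _ (ctr_R_le_ker 1) (FreeGroup.of 0) (by simp [ctrφ]) (Subgroup.mem_zpowers _) ?_
    have : QuotientGroup.mk' (ctrR 1) (FreeGroup.of 1) = 1 := by
      rw [QuotientGroup.mk'_apply, QuotientGroup.eq_one_iff]
      simpa [ctrGen] using ctr_gen_mem 1
    rw [this]; exact Subgroup.one_mem _
  · show (ctrφ 2).ker ≤ ctrR 2
    refine ker_le_aux _ _ (ctr_R_le_ker 2) (FreeGroup.of 0) (by simp [ctrφ]) (Subgroup.mem_zpowers _) ?_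
    have h : QuotientGroup.mk' (ctrR 2) (FreeGroup.of 0 * (FreeGroup.of 1)⁻¹) = 1 := by
      rw [QuotientGroup.mk'_apply, QuotientGroup.eq_one_iff]
      simpa [ctrGen] using ctr_gen_mem 2
    have h2 : QuotientGroup.mk' (ctrR 2) (FreeGroup.of 1) = QuotientGroup.mk' (ctrR 2) (FreeGroup.of 0) := by
      rw [_root_.map_mul, _root_.map_inv] at h
      exact (mul_inv_eq_one.1 h).symm
    rw [h2]; exact Subgroup.mem_zpowers _

lemma ctr_surj (i : Fin 3) : Function.Surjective (ctrφ i) := by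
  intro z
  fin_cases i
  · exact ⟨FreeGroup.of 1 ^ Multiplicative.toAdd z, by
      simp [ctrφ, map_zpow, ← ofAdd_zsmul]⟩
  · exact ⟨FreeGroup.of 0 ^ Multiplicative.toAdd z, by
      simp [ctrφ, map_zpow, ← ofAdd_zsmul]⟩
  · exact ⟨FreeGroup.of 0 ^ Multiplicative.toAdd z, by
      simp [ctrφ, map_zpow, ← ofAdd_zsmul]⟩

def sσ : F2 →* Multiplicative ℤ × Multiplicative ℤ := (ctrφ 1).prod (ctrφ 0)

lemma phi2_eq : ctrφ 2 = ctrφ 1 * ctrφ 0 := by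
  apply FreeGroup.ext_hom
  intro a
  fin_cases a <;> simp [ctrφ]

open scoped commutatorElement in
def ctrC : F2 := ⁅(FreeGroup.of 0 : F2), FreeGroup.of 1⁆

def ctrN : Subgroup F2 := Subgroup.normalClosure {ctrC}

instance : ctrN.Normal := Subgroup.normalClosure_normal

lemma ker_sσ_le_ctrN : sσ.ker ≤ ctrN := by
  set mk := QuotientGroup.mk' ctrN with hmk
  set a := mk (FreeGroup.of 0)
  set b := mk (FreeGroup.of 1)
  have hcomm : Commute a b := by
    rw [← commutatorElement_eq_one_iff_commute, ← map_commutatorElement]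
    rw [QuotientGroup.mk'_apply, QuotientGroup.eq_one_iff]
    exact Subgroup.subset_normalClosure rfl
  set β : Multiplicative ℤ × Multiplicative ℤ →* F2 ⧸ ctrN :=
    MonoidHom.noncommCoprod (zpowersHom _ a) (zpowersHom _ b)
      (fun m n => by rw [zpowersHom_apply, zpowersHom_apply]; exact Commute.zpow_zpow hcomm _ _) with hβ
  have hcompat : β.comp sσ = mk := by
    apply FreeGroup.ext_hom
    intro x
    fin_cases x <;>
      simp [hβ, sσ, ctrφ, MonoidHom.noncommCoprod_apply, zpowersHom_apply] <;> rfl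
  intro w hw
  have : mk w = 1 := by
    rw [← hcompat]
    simp only [MonoidHom.comp_apply, MonoidHom.mem_ker.1 hw, _root_.map_one]
  exact (QuotientGroup.eq_one_iff w).1 this

lemma ctrN_le_comm : ctrN ≤ ⁅ctrR 0, ctrR 1⁆ := by
  apply Subgroup.normalClosure_le_normal
  rw [Set.singleton_subset_iff]
  show ctrC ∈ ⁅ctrR 0, ctrR 1⁆
  exact Subgroup.commutator_mem_commutator
    (by simpa [ctrGen] using ctr_gen_mem 0) (by simpa [ctrGen] using ctr_gen_mem 1)

lemma comm_le_ker_sσ : ⁅(⊤ : Subgroup F2), (⊤ : Subgroup F2)⁆ ≤ sσ.ker := by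
  rw [← commutator_def]
  exact Abelianization.commutator_subset_ker sσ

lemma comm_eq_ker_sσ : ⁅(⊤ : Subgroup F2), (⊤ : Subgroup F2)⁆ = sσ.ker := by
  refine le_antisymm comm_le_ker_sσ ?_
  calc sσ.ker ≤ ctrN := ker_sσ_le_ctrN
    _ ≤ ⁅ctrR 0, ctrR 1⁆ := ctrN_le_comm
    _ ≤ ⁅(⊤ : Subgroup F2), (⊤ : Subgroup F2)⁆ := Subgroup.commutator_mono le_top le_top

lemma comm_eq_comm_R : ⁅(⊤ : Subgroup F2), (⊤ : Subgroup F2)⁆ = ⁅ctrR 0, ctrR 1⁆ := by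
  refine le_antisymm ?_ (Subgroup.commutator_mono le_top le_top)
  calc ⁅(⊤ : Subgroup F2), (⊤ : Subgroup F2)⁆ ≤ sσ.ker := comm_le_ker_sσ
    _ ≤ ctrN := ker_sσ_le_ctrN
    _ ≤ ⁅ctrR 0, ctrR 1⁆ := ctrN_le_comm

lemma ker_sσ_eq_inf (i j : Fin 3) (h : i ≠ j) : sσ.ker = (ctrφ i).ker ⊓ (ctrφ j).ker := by
  have h2 : ∀ w : F2, ctrφ 2 w = ctrφ 1 w * ctrφ 0 w := fun w => by rw [phi2_eq]; rfl
  ext w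
  simp only [MonoidHom.mem_ker, Subgroup.mem_inf, sσ, MonoidHom.prod_apply, Prod.mk_eq_one]
  fin_cases i <;> fin_cases j <;>
    first
      | exact absurd rfl h
      | (constructor <;> rintro ⟨hA, hB⟩ <;> refine ⟨?_, ?_⟩ <;> simp_all [h2 w])

lemma ctr_mem0 : FreeGroup.of 0 ∈ ctrR 0 := by simpa [ctrGen] using ctr_gen_mem 0
lemma ctr_mem1 : FreeGroup.of 1 ∈ ctrR 1 := by simpa [ctrGen] using ctr_gen_mem 1
lemma ctr_mem2 : FreeGroup.of 0 * (FreeGroup.of 1)⁻¹ ∈ ctrR 2 := by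
  simpa [ctrGen] using ctr_gen_mem 2

lemma ctr_sup (i j : Fin 3) (h : i ≠ j) : ctrR i ⊔ ctrR j = ⊤ := by
  have e1 : (FreeGroup.of 1 : F2) = (FreeGroup.of 0 * (FreeGroup.of 1)⁻¹)⁻¹ * FreeGroup.of 0 := by
    group
  have e0 : (FreeGroup.of 0 : F2) = (FreeGroup.of 0 * (FreeGroup.of 1)⁻¹) * FreeGroup.of 1 := by
    group
  fin_cases i <;> fin_cases j
  · exact absurd rfl h
  · exact ctr_eq_top (Subgroup.mem_sup_left ctr_mem0) (Subgroup.mem_sup_right ctr_mem1)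
  · refine ctr_eq_top (Subgroup.mem_sup_left ctr_mem0) ?_
    rw [e1]
    exact mul_mem (inv_mem (Subgroup.mem_sup_right ctr_mem2)) (Subgroup.mem_sup_left ctr_mem0)
  · exact ctr_eq_top (Subgroup.mem_sup_right ctr_mem0) (Subgroup.mem_sup_left ctr_mem1)
  · exact absurd rfl h
  · refine ctr_eq_top ?_ (Subgroup.mem_sup_left ctr_mem1)
    rw [e0]
    exact mul_mem (Subgroup.mem_sup_right ctr_mem2) (Subgroup.mem_sup_left ctr_mem1)
  · refine ctr_eq_top (Subgroup.mem_sup_right ctr_mem0) ?_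
    rw [e1]
    exact mul_mem (inv_mem (Subgroup.mem_sup_left ctr_mem2)) (Subgroup.mem_sup_right ctr_mem0)
  · refine ctr_eq_top ?_ (Subgroup.mem_sup_right ctr_mem1)
    rw [e0]
    exact mul_mem (Subgroup.mem_sup_left ctr_mem2) (Subgroup.mem_sup_right ctr_mem1)
  · exact absurd rfl h


/-- (a) `F/Rᵢ ≅ ℤ` for each `i`; (b) `RᵢRⱼ = F` for `i ≠ j` (so `F/RᵢRⱼ = 1`);
(c) `[F,F] = ⁅R₁,R₂⁆ = Rᵢ ∩ Rⱼ` for all `i ≠ j`. -/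
theorem counterexample_data :
    (∀ i : Fin 3, Nonempty ((FreeGroup (Fin 2) ⧸ ctrR i) ≃* Multiplicative ℤ)) ∧
    (∀ i j : Fin 3, i ≠ j → ctrR i ⊔ ctrR j = ⊤) ∧
    (⁅(⊤ : Subgroup (FreeGroup (Fin 2))), (⊤ : Subgroup (FreeGroup (Fin 2)))⁆
        = ⁅ctrR 0, ctrR 1⁆ ∧
      ∀ i j : Fin 3, i ≠ j →
        ⁅(⊤ : Subgroup (FreeGroup (Fin 2))), (⊤ : Subgroup (FreeGroup (Fin 2)))⁆
          = ctrR i ⊓ ctrR j) := by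
  refine ⟨?_, ctr_sup, comm_eq_comm_R, ?_⟩
  · intro i
    exact ⟨(QuotientGroup.quotientMulEquivOfEq (ctr_ker_eq i)).trans
      (QuotientGroup.quotientKerEquivOfSurjective _ (ctr_surj i))⟩
  · intro i j hij
    rw [comm_eq_ker_sσ, ker_sσ_eq_inf i j hij, ← ctr_ker_eq, ← ctr_ker_eq]
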